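/- Let K be an N×N real matrix and S ⊆ {1,...,N} with det(K_S) ≠ 0. Then det(K + (I-K) 1_{S̄}) = det(K_S); in particular K + (I-K) 1_{S̄} is invertible. -/

import Mathlib

open Matrix BigOperators

/-- Principal minor of `K` indexed by the subset `J`. -/
def pm {N : ℕ} (K : Matrix (Fin N) (Fin N) ℝ) (J : Finset (Fin N)) : ℝ :=
  (K.submatrix (fun i : J => (i : Fin N)) (fun j : J => (j : Fin N))).det

/-- Diagonal 0/1 matrix supported on `J`. -/
def ind {N : ℕ} (J : Finset (Fin N)) : Matrix (Fin N) (Fin N) ℝ :=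
  Matrix.diagonal (fun i => if i ∈ J then (1 : ℝ) else 0)

lemma stmt_8_det {N : ℕ} (K : Matrix (Fin N) (Fin N) ℝ) (S : Finset (Fin N)) :
    (K + (1 - K) * ind Sᶜ).det = pm K S := by
  set M := K + (1 - K) * ind Sᶜ with hM
  have hentry : ∀ i j, M i j =
      if j ∈ S then K i j else (if i = j then (1:ℝ) else 0) := by
    intro i j
    have : M i j = K i j + (1 - K) i j * (if j ∈ Sᶜ then (1:ℝ) else 0) := by
      simp [hM, ind, Matrix.add_apply, Matrix.mul_diagonal]
    rw [this]
    by_cases hj : j ∈ S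
    · simp [hj]
    · simp only [hj, Finset.mem_compl, not_false_iff, if_true, if_false,
        Matrix.sub_apply, Matrix.one_apply, mul_one]
      ring
  let e : ({x // x ∈ S} ⊕ {x // x ∉ S}) ≃ Fin N := Equiv.sumCompl (· ∈ S)
  have hdet : M.det = (M.submatrix e e).det := (Matrix.det_submatrix_equiv_self e M).symm
  rw [hdet]
  have hb : M.submatrix e e =
      Matrix.fromBlocks
        (K.submatrix (fun i : S => (i : Fin N)) (fun j : S => (j : Fin N)))
        0
        (Matrix.of (fun (i : {x // x ∉ S}) (j : {x // x ∈ S}) => M (i : Fin N) (j : Fin N)))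
        1 := by
    ext i j
    cases i with
    | inl i =>
      cases j with
      | inl j =>
        simp only [Matrix.submatrix_apply, Matrix.fromBlocks_apply₁₁, e,
          Equiv.sumCompl_apply_inl, Equiv.sumCompl_apply_inr]
        rw [hentry]
        simp [j.2]
      | inr j =>
        simp only [Matrix.submatrix_apply, Matrix.fromBlocks_apply₁₂, e,
          Equiv.sumCompl_apply_inl, Equiv.sumCompl_apply_inr]
        rw [hentry]
        have : (i : Fin N) ≠ (j : Fin N) := by
          intro hij
          exact j.2 (hij ▸ i.2)
        simp [j.2, this]
    | inr i =>
      cases j with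
      | inl j =>
        simp [e, Matrix.submatrix_apply]
      | inr j =>
        simp only [Matrix.submatrix_apply, Matrix.fromBlocks_apply₂₂, e,
          Equiv.sumCompl_apply_inr]
        rw [hentry]
        simp only [j.2, if_neg]
        rw [Matrix.one_apply]
        simp [Subtype.ext_iff]
  rw [hb, Matrix.det_fromBlocks_zero₁₂]
  simp [pm]

theorem stmt_8 {N : ℕ} (K : Matrix (Fin N) (Fin N) ℝ) (S : Finset (Fin N))
    (h : pm K S ≠ 0) :
    (K + (1 - K) * ind Sᶜ).det = pm K S ∧ IsUnit (K + (1 - K) * ind Sᶜ) := by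
  have hd := stmt_8_det K S
  refine ⟨hd, ?_⟩
  rw [Matrix.isUnit_iff_isUnit_det, hd]
  exact isUnit_iff_ne_zero.mpr h
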